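/- Every lattice homomorphism on an AM-space attains its norm. -/

import Mathlib

open Filter Topology


/-- A real-valued lattice homomorphism on a Banach lattice. -/
def IsLatticeHomFunctional {X : Type*} [NormedAddCommGroup X] [Lattice X] [IsOrderedAddMonoid X] [HasSolidNorm X] [NormedSpace ℝ X]
    (f : X →L[ℝ] ℝ) : Prop :=
  ∀ x y : X, f (x ⊔ y) = max (f x) (f y)

/-- An atom of a Banach lattice: a positive element generating a one-dimensional ideal. -/
def IsLatAtom {X : Type*} [NormedAddCommGroup X] [Lattice X] [IsOrderedAddMonoid X] [HasSolidNorm X] [NormedSpace ℝ X] (x₀ : X) : Prop :=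
  0 < x₀ ∧ ∀ y : X, 0 ≤ y → y ≤ x₀ → ∃ r : ℝ, y = r • x₀

/-- `l` is the coordinate functional of the atom `x₀`: the band projection onto the span of
`x₀` is `x ↦ l x • x₀`, i.e. `x - l x • x₀` is disjoint from `x₀` for every `x`. -/
def IsCoordinateFunctional {X : Type*} [NormedAddCommGroup X] [Lattice X] [IsOrderedAddMonoid X] [HasSolidNorm X] [NormedSpace ℝ X]
    (l : X →L[ℝ] ℝ) (x₀ : X) : Prop :=
  ∀ x : X, |x - l x • x₀| ⊓ x₀ = 0

/-- An equivalent lattice norm on `X`. -/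
structure LatticeNorm (X : Type*) [NormedAddCommGroup X] [Lattice X] [NormedSpace ℝ X] where
  n : X → ℝ
  add_le : ∀ x y : X, n (x + y) ≤ n x + n y
  smul_eq : ∀ (r : ℝ) (x : X), n (r • x) = |r| * n x
  eq_zero_of : ∀ x : X, n x = 0 → x = 0
  mono : ∀ x y : X, |x| ≤ |y| → n x ≤ n y
  lower : ∃ c : ℝ, 0 < c ∧ ∀ x : X, c * ‖x‖ ≤ n x
  upper : ∃ C : ℝ, 0 < C ∧ ∀ x : X, n x ≤ C * ‖x‖

/-- every lattice homomorphism on an AM-space attains its norm. -/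
theorem latticeHom_on_AM_space_attains_norm
    {X : Type*} [NormedAddCommGroup X] [Lattice X] [IsOrderedAddMonoid X] [HasSolidNorm X] [NormedSpace ℝ X] [CompleteSpace X]
    (hAM : ∀ x y : X, 0 ≤ x → 0 ≤ y → ‖x ⊔ y‖ = max ‖x‖ ‖y‖)
    (f : X →L[ℝ] ℝ) (hf : IsLatticeHomFunctional f) :
    ∃ x : X, ‖x‖ ≤ 1 ∧ |f x| = ‖f‖ := by
  have hf : ∀ x y : X, f (x ⊔ y) = max (f x) (f y) := hf
  classical
  by_cases hM : ‖f‖ = 0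
  · exact ⟨0, by simp, by simp [hM]⟩
  have hM0 : (0:ℝ) < ‖f‖ := lt_of_le_of_ne (norm_nonneg f) (Ne.symm hM)
  set M : ℝ := ‖f‖ with hMdef
  -- basic lattice-hom facts
  have habs : ∀ x : X, f |x| = |f x| := by
    intro x
    have h1 : |x| = x ⊔ (-x) := rfl
    rw [h1, hf, map_neg, abs_eq_max_neg]
  have hinf : ∀ x y : X, f (x ⊓ y) = min (f x) (f y) := by
    intro x y
    have h2 : (x ⊓ y) = x + y - (x ⊔ y) := (eq_sub_of_add_eq (inf_add_sup x y))
    have h3 := inf_add_sup (f x) (f y)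
    rw [h2, map_sub, map_add, hf]
    linarith
  -- choose approximating positive elements
  have hsel : ∀ n : ℕ, ∃ x : X, ‖x‖ ≤ 1 ∧ 0 ≤ x ∧ M * (1 - (1/4:ℝ)^(n+1)) < f x := by
    intro n
    have hq : (0:ℝ) < (1/4:ℝ)^(n+1) := by positivity
    have hlt : M * (1 - (1/4:ℝ)^(n+1)) < M := by nlinarith
    obtain ⟨x, hx1, hx2⟩ := f.exists_lt_apply_of_lt_opNorm hlt
    refine ⟨|x|, by rw [norm_abs_eq_norm]; exact hx1.le, abs_nonneg x, ?_⟩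
    rw [habs]
    calc M * (1 - (1/4:ℝ)^(n+1)) < ‖f x‖ := hx2
    _ = |f x| := Real.norm_eq_abs _
  choose a ha1 ha2 ha3 using hsel
  -- recursive construction
  let st : ℕ → X → X := fun n un =>
    un ⊔ ((a (n+1) ⊓ (un + (max 0 ((M * (1 - (1/4:ℝ)^(n+2)) - f un) / f (a (n+1)))) • a (n+1))) ⊔ 0)
  let u : ℕ → X := fun n => Nat.rec (a 0) st n
  have hu0 : u 0 = a 0 := rfl
  have huS : ∀ n, u (n+1) = st n (u n) := fun n => rfl
  -- bounds on f (a n)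
  have hfa_pos : ∀ n, (3/4:ℝ) * M ≤ f (a n) := by
    intro n
    have hq : (1/4:ℝ)^(n+1) ≤ (1/4:ℝ)^1 :=
      pow_le_pow_of_le_one (by norm_num) (by norm_num) (Nat.le_add_left 1 n)
    have := ha3 n
    nlinarith
  -- main invariant
  have key : ∀ n, 0 ≤ u n ∧ ‖u n‖ ≤ 1 ∧ M * (1 - (1/4:ℝ)^(n+1)) ≤ f (u n) := by
    intro n
    induction n with
    | zero => exact ⟨ha2 0, ha1 0, (ha3 0).le⟩
    | succ n ih =>
      obtain ⟨hpos, hnorm, hft⟩ := ih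
      set t : ℝ := f (u n) with ht
      set ε : ℝ := max 0 ((M * (1 - (1/4:ℝ)^(n+2)) - t) / f (a (n+1))) with hε
      have hε0 : 0 ≤ ε := le_max_left _ _
      set v : X := (a (n+1) ⊓ (u n + ε • a (n+1))) ⊔ 0 with hv
      have hustep : u (n+1) = u n ⊔ v := rfl
      have hv0 : 0 ≤ v := le_sup_right
      have hva : v ≤ a (n+1) := sup_le (le_trans inf_le_left le_rfl) (ha2 (n+1))
      have hvnorm : ‖v‖ ≤ 1 := by
        calc ‖v‖ ≤ ‖a (n+1)‖ := by
              apply HasSolidNorm.solid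
              rw [abs_of_nonneg hv0, abs_of_nonneg (ha2 (n+1))]
              exact hva
        _ ≤ 1 := ha1 (n+1)
      refine ⟨le_trans hpos (by rw [hustep]; exact le_sup_left), ?_, ?_⟩
      · rw [hustep, hAM _ _ hpos hv0]
        exact max_le hnorm hvnorm
      · -- value bound
        have hfv : f v = max (min (f (a (n+1))) (t + ε * f (a (n+1)))) 0 := by
          rw [hv, hf, hinf, map_add, map_smul, map_zero]
          rfl
        have hεfa : M * (1 - (1/4:ℝ)^(n+2)) - t ≤ ε * f (a (n+1)) := by
          have h1 : (M * (1 - (1/4:ℝ)^(n+2)) - t) / f (a (n+1)) ≤ ε := le_max_right _ _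
          have h2 : (0:ℝ) < f (a (n+1)) := lt_of_lt_of_le (by nlinarith) (hfa_pos (n+1))
          have h3 := mul_le_mul_of_nonneg_right h1 h2.le
          rwa [div_mul_cancel₀ _ h2.ne'] at h3
        have hmin : M * (1 - (1/4:ℝ)^(n+2)) ≤ min (f (a (n+1))) (t + ε * f (a (n+1))) := by
          refine le_min (ha3 (n+1)).le (by linarith)
        calc M * (1 - (1/4:ℝ)^(n+2)) ≤ min (f (a (n+1))) (t + ε * f (a (n+1))) := hmin
        _ ≤ max (min (f (a (n+1))) (t + ε * f (a (n+1)))) 0 := le_max_left _ _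
        _ = f v := hfv.symm
        _ ≤ max t (f v) := le_max_right _ _
        _ = f (u (n+1)) := by rw [hustep]; exact (hf (u n) v).symm
  -- Cauchy estimate
  have hdiff : ∀ n, ‖u (n+1) - u n‖ ≤ (1/4:ℝ) * (1/4:ℝ)^n := by
    intro n
    obtain ⟨hpos, hnorm, hft⟩ := key n
    set t : ℝ := f (u n) with ht
    set ε : ℝ := max 0 ((M * (1 - (1/4:ℝ)^(n+2)) - t) / f (a (n+1))) with hε
    have hε0 : 0 ≤ ε := le_max_left _ _
    set v : X := (a (n+1) ⊓ (u n + ε • a (n+1))) ⊔ 0 with hv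
    have hustep : u (n+1) = u n ⊔ v := rfl
    -- upper bound on ε
    have hεle : ε ≤ (1/4:ℝ)^(n+1) := by
      have h2 : (0:ℝ) < f (a (n+1)) := lt_of_lt_of_le (by nlinarith) (hfa_pos (n+1))
      have hq : (0:ℝ) < (1/4:ℝ)^(n+1) := by positivity
      apply max_le hq.le
      rw [div_le_iff₀ h2]
      have h4 : ((1/4:ℝ))^(n+2) = (1/4) * (1/4:ℝ)^(n+1) := by ring
      rw [h4]
      nlinarith [mul_le_mul_of_nonneg_left (hfa_pos (n+1)) hq.le, hft, hM0]
    -- order bounds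
    have hle1 : u n ≤ u (n+1) := by rw [hustep]; exact le_sup_left
    have hle2 : u (n+1) ≤ u n + ((ε • a (n+1)) ⊔ 0) := by
      rw [hustep]
      apply sup_le
      · exact le_add_of_nonneg_right le_sup_right
      · apply sup_le
        · calc (a (n+1) ⊓ (u n + ε • a (n+1))) ≤ u n + ε • a (n+1) := inf_le_right
          _ ≤ u n + ((ε • a (n+1)) ⊔ 0) := add_le_add_right le_sup_left _
        · calc (0:X) ≤ u n := hpos
          _ ≤ u n + ((ε • a (n+1)) ⊔ 0) := le_add_of_nonneg_right le_sup_right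
    have habs_le : |u (n+1) - u n| ≤ |ε • a (n+1)| := by
      rw [abs_of_nonneg (sub_nonneg.2 hle1)]
      have h1 : u (n+1) - u n ≤ (ε • a (n+1)) ⊔ 0 := by
        rw [sub_le_iff_le_add']; exact hle2
      exact le_trans h1 (sup_le (le_abs_self _) (abs_nonneg _))
    calc ‖u (n+1) - u n‖ ≤ ‖ε • a (n+1)‖ := HasSolidNorm.solid habs_le
    _ = |ε| * ‖a (n+1)‖ := by rw [norm_smul, Real.norm_eq_abs]
    _ ≤ (1/4:ℝ)^(n+1) * 1 := by
        apply mul_le_mul (by rwa [abs_of_nonneg hε0]) (ha1 (n+1)) (norm_nonneg _) (by positivity)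
    _ = (1/4:ℝ) * (1/4:ℝ)^n := by ring
  -- convergence
  have hcauchy : CauchySeq u := by
    apply cauchySeq_of_le_geometric (1/4:ℝ) (1/4:ℝ) (by norm_num)
    intro n
    rw [dist_eq_norm, norm_sub_rev]
    exact hdiff n
  obtain ⟨x, hx⟩ := cauchySeq_tendsto_of_complete hcauchy
  refine ⟨x, ?_, ?_⟩
  · have hn : Tendsto (fun n => ‖u n‖) atTop (nhds ‖x‖) := hx.norm
    exact le_of_tendsto hn (Eventually.of_forall fun n => (key n).2.1)
  · have hfc : Tendsto (fun n => f (u n)) atTop (nhds (f x)) := (f.continuous.tendsto x).comp hx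
    have hub : ∀ n, f (u n) ≤ M := by
      intro n
      calc f (u n) ≤ |f (u n)| := le_abs_self _
      _ = ‖f (u n)‖ := (Real.norm_eq_abs _).symm
      _ ≤ ‖f‖ * ‖u n‖ := f.le_opNorm _
      _ ≤ M * 1 := mul_le_mul_of_nonneg_left (key n).2.1 (norm_nonneg f)
      _ = M := mul_one M
    have hlb : Tendsto (fun n : ℕ => M * (1 - (1/4:ℝ)^(n+1))) atTop (nhds M) := by
      have h0 : Tendsto (fun n : ℕ => (1/4:ℝ)^(n+1)) atTop (nhds 0) := by
        have := tendsto_pow_atTop_nhds_zero_of_lt_one (by norm_num : (0:ℝ) ≤ 1/4) (by norm_num : (1/4:ℝ) < 1)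
        exact this.comp (tendsto_add_atTop_nat 1)
      have := (tendsto_const_nhds (x := (1:ℝ)) (f := atTop)).sub h0
      simpa using (tendsto_const_nhds (x := M) (f := atTop)).mul this
    have h1 : M ≤ f x := le_of_tendsto_of_tendsto' hlb hfc fun n => (key n).2.2
    have h2 : f x ≤ M := le_of_tendsto hfc (Eventually.of_forall hub)
    rw [le_antisymm h2 h1, abs_of_nonneg hM0.le]
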